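/- Suppose q = 1 (so that, by the standing assumption, K has characteristic 0). Let P = Σ_{j=0}^m p_j(M) D_1^j with m ≥ 0 and p_m ≠ 0, let α ∈ K be nonzero, let s ≥ 1, and fix a Jordan chain (Ψ_{α,r})_{r≥1} at α. Then P Ψ_{α,s} − (−1)^m · s(s+1)⋯(s+m−1) · p_m(α) · Ψ_{α,s+m} lies in the K-linear span of {Ψ_{α,r} : 1 ≤ r < s+m} (the product s(s+1)⋯(s+m−1) being 1 when m = 0). -/

import Mathlib

open Polynomial
open scoped Classical

noncomputable section

/-- The q-integer {n}_q. -/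
def qInt (K : Type*) [Field K] (q : K) (n : ℤ) : K :=
  if q = 1 then (n : K) else (q ^ n - 1) / (q - 1)

/-- The multiplication operator `M` on formal Laurent series `L = ℤ → K`:
`(M a)(n) = a(n-1)`. -/
def Mop (K : Type*) [Field K] : Module.End K (ℤ → K) where
  toFun a := fun n => a (n - 1)
  map_add' _ _ := rfl
  map_smul' _ _ := rfl

/-- The q-difference operator `D_q` on `L = ℤ → K`: `(D_q a)(n) = {n+1}_q · a(n+1)`. -/
def Dq (K : Type*) [Field K] (q : K) : Module.End K (ℤ → K) where
  toFun a := fun n => qInt K q (n + 1) * a (n + 1)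
  map_add' x y := by funext n; simp [Pi.add_apply, mul_add]
  map_smul' c x := by funext n; simp [Pi.smul_apply, smul_eq_mul]; ring

/-- The element `Ψ_{α,1} ∈ L`, `Ψ_{α,1}(n) = α^{-n}`. -/
def Psi1 (K : Type*) [Field K] (α : K) : ℤ → K := fun n => α ^ (-n)

/-- A Jordan chain at `α`: a sequence `(Ψ_{α,s})_{s ≥ 1}` with first term `Ψ_{α,1}`
and `(M - α·id) Ψ_{α,s} = Ψ_{α,s-1}` for `s ≥ 2`. -/
def IsJordanChain (K : Type*) [Field K] (α : K) (Ψ : ℕ → ℤ → K) : Prop :=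
  Ψ 1 = Psi1 K α ∧ ∀ s : ℕ, 2 ≤ s → Mop K (Ψ s) - α • Ψ s = Ψ (s - 1)

/- ### Auxiliary machinery -/

/-- The operator `N = M - α`. -/
def Nop (K : Type*) [Field K] (α : K) : Module.End K (ℤ → K) := Mop K - α • 1

/-- The span of `Ψ r` for `1 ≤ r < k`. -/
def Vsp {K : Type*} [Field K] (Ψ : ℕ → ℤ → K) (k : ℕ) : Submodule K (ℤ → K) :=
  Submodule.span K (Ψ '' {r : ℕ | 1 ≤ r ∧ r < k})

section Aux

variable {K : Type*} [Field K] {α : K} {Ψ : ℕ → ℤ → K}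

lemma mem_Vsp {r k : ℕ} (h1 : 1 ≤ r) (h2 : r < k) : Ψ r ∈ Vsp Ψ k :=
  Submodule.subset_span ⟨r, ⟨h1, h2⟩, rfl⟩

lemma Vsp_mono {k l : ℕ} (h : k ≤ l) : Vsp Ψ k ≤ Vsp Ψ l :=
  Submodule.span_mono (Set.image_mono fun r hr => ⟨hr.1, lt_of_lt_of_le hr.2 h⟩)

lemma Mop_apply (a : ℤ → K) (n : ℤ) : Mop K a n = a (n - 1) := rfl

lemma Dq1_apply (a : ℤ → K) (n : ℤ) : Dq K 1 a n = ((n + 1 : ℤ) : K) * a (n + 1) := by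
  simp [Dq, qInt]

lemma Nop_apply (a : ℤ → K) (n : ℤ) : Nop K α a n = a (n - 1) - α * a n := by
  simp [Nop, Mop, LinearMap.sub_apply, LinearMap.smul_apply, Module.End.one_apply,
    Pi.sub_apply, Pi.smul_apply, smul_eq_mul]

lemma Nop_def (a : ℤ → K) : Nop K α a = Mop K a - α • a := by
  simp [Nop, LinearMap.sub_apply, LinearMap.smul_apply, Module.End.one_apply]

lemma N_psi_one (hΨ : IsJordanChain K α Ψ) (hα : α ≠ 0) : Nop K α (Ψ 1) = 0 := by
  funext n
  rw [Nop_apply, hΨ.1]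
  simp only [Psi1, Pi.zero_apply]
  rw [show -(n - 1) = -n + 1 by ring, zpow_add₀ hα, zpow_one]
  ring

lemma N_psi (hΨ : IsJordanChain K α Ψ) {r : ℕ} (hr : 1 ≤ r) :
    Nop K α (Ψ (r + 1)) = Ψ r := by
  have h := hΨ.2 (r + 1) (by omega)
  simpa [Nop_def] using h

lemma ker_N (hΨ : IsJordanChain K α Ψ) (hα : α ≠ 0) {x : ℤ → K}
    (hx : Nop K α x = 0) : x ∈ Submodule.span K {Ψ 1} := by
  have hrec : ∀ n : ℤ, x (n - 1) = α * x n := by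
    intro n
    have h := congrFun hx n
    rw [Nop_apply, Pi.zero_apply, sub_eq_zero] at h
    exact h
  have key : ∀ n : ℤ, x n = α ^ (-n) * x 0 := by
    intro n
    induction n using Int.induction_on with
    | zero => simp
    | succ i ih =>
      have h := hrec ((i : ℤ) + 1)
      rw [add_sub_cancel_right] at h
      have hx1 : x ((i : ℤ) + 1) = α⁻¹ * x i := by rw [h]; field_simp
      rw [hx1, ih, show (-((i : ℤ) + 1)) = -(i : ℤ) + (-1) by ring, zpow_add₀ hα,
        zpow_neg_one]
      ring
    | pred i ih =>
      have h := hrec (-(i : ℤ))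
      rw [h, ih, show -(-(i : ℤ) - 1) = -(-(i : ℤ)) + 1 by ring, zpow_add₀ hα, zpow_one]
      ring
  have hxe : x = x 0 • Ψ 1 := by
    funext n
    rw [hΨ.1]
    simp only [Pi.smul_apply, Psi1, smul_eq_mul]
    rw [key n]; ring
  rw [hxe]
  exact Submodule.smul_mem _ _ (Submodule.mem_span_singleton_self _)

lemma ND_comm (a : ℤ → K) : Nop K α (Dq K 1 a) = Dq K 1 (Nop K α a) - a := by
  funext n
  simp only [Pi.sub_apply, Nop_apply, Dq1_apply]
  rw [show n - 1 + 1 = n by ring, show n + 1 - 1 = n by ring]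
  push_cast
  ring

lemma N_map (hΨ : IsJordanChain K α Ψ) (hα : α ≠ 0) {k : ℕ} {x : ℤ → K}
    (hx : x ∈ Vsp Ψ (k + 1)) : Nop K α x ∈ Vsp Ψ k := by
  have h : Vsp Ψ (k + 1) ≤ Submodule.comap (Nop K α) (Vsp Ψ k) := by
    rw [Vsp, Submodule.span_le]
    rintro _ ⟨r, ⟨hr1, hr2⟩, rfl⟩
    simp only [SetLike.mem_coe, Submodule.mem_comap]
    match r, hr1 with
    | 1, _ => rw [N_psi_one hΨ hα]; exact zero_mem _
    | (r' + 2), _ =>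
      rw [N_psi hΨ (show 1 ≤ r' + 1 by omega)]
      exact mem_Vsp (by omega) (by omega)
  exact h hx

lemma M_map (hΨ : IsJordanChain K α Ψ) (hα : α ≠ 0) {k : ℕ} {x : ℤ → K}
    (hx : x ∈ Vsp Ψ k) : Mop K x ∈ Vsp Ψ k := by
  have hM : Mop K x = Nop K α x + α • x := by rw [Nop_def]; abel
  rw [hM]
  exact add_mem (N_map hΨ hα (Vsp_mono (Nat.le_succ k) hx)) (Submodule.smul_mem _ _ hx)

lemma lift_N (hΨ : IsJordanChain K α Ψ) (hα : α ≠ 0) {k : ℕ} (hk : 1 ≤ k) {x : ℤ → K}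
    (hx : Nop K α x ∈ Vsp Ψ k) : x ∈ Vsp Ψ (k + 1) := by
  have surj : ∀ y ∈ Vsp Ψ k, ∃ z ∈ Vsp Ψ (k + 1), Nop K α z = y := by
    intro y hy
    induction hy using Submodule.span_induction with
    | mem y hy =>
      obtain ⟨r, ⟨hr1, hr2⟩, rfl⟩ := hy
      exact ⟨Ψ (r + 1), mem_Vsp (by omega) (by omega), N_psi hΨ hr1⟩
    | zero => exact ⟨0, zero_mem _, map_zero _⟩
    | add a b _ _ ha hb =>
      obtain ⟨za, hza, hza'⟩ := ha
      obtain ⟨zb, hzb, hzb'⟩ := hb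
      exact ⟨za + zb, add_mem hza hzb, by rw [map_add, hza', hzb']⟩
    | smul c a _ ha =>
      obtain ⟨za, hza, hza'⟩ := ha
      exact ⟨c • za, Submodule.smul_mem _ _ hza, by rw [map_smul, hza']⟩
  obtain ⟨z, hz, hz'⟩ := surj _ hx
  have hker : x - z ∈ Submodule.span K {Ψ 1} :=
    ker_N hΨ hα (by rw [map_sub, hz', sub_self])
  have h1 : Ψ 1 ∈ Vsp Ψ (k + 1) := mem_Vsp le_rfl (by omega)
  have hxz : x - z ∈ Vsp Ψ (k + 1) :=
    Submodule.span_le.mpr (Set.singleton_subset_iff.mpr h1) hker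
  have := add_mem hxz hz
  simpa using this

lemma D_psi (hΨ : IsJordanChain K α Ψ) (hα : α ≠ 0) :
    ∀ s : ℕ, 1 ≤ s → Dq K 1 (Ψ s) + (s : K) • Ψ (s + 1) ∈ Vsp Ψ (s + 1) := by
  intro s hs
  induction s, hs using Nat.le_induction with
  | base =>
    have h0 : Nop K α (Dq K 1 (Ψ 1) + ((1 : ℕ) : K) • Ψ 2) = 0 := by
      rw [map_add, map_smul, ND_comm, N_psi_one hΨ hα, N_psi hΨ le_rfl]
      simp
    have hk := ker_N hΨ hα h0
    exact Submodule.span_le.mpr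
      (Set.singleton_subset_iff.mpr (mem_Vsp le_rfl (by omega))) hk
  | succ s hs ih =>
    apply lift_N hΨ hα (k := s + 1) (by omega)
    have hN : Nop K α (Dq K 1 (Ψ (s + 1)) + ((s + 1 : ℕ) : K) • Ψ (s + 2))
        = Dq K 1 (Ψ s) + (s : K) • Ψ (s + 1) := by
      rw [map_add, map_smul, ND_comm, N_psi hΨ hs, N_psi hΨ (by omega)]
      push_cast
      module
    rw [hN]
    exact ih

lemma D_map (hΨ : IsJordanChain K α Ψ) (hα : α ≠ 0) {k : ℕ} {x : ℤ → K}
    (hx : x ∈ Vsp Ψ k) : Dq K 1 x ∈ Vsp Ψ (k + 1) := by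
  have h : Vsp Ψ k ≤ Submodule.comap (Dq K 1) (Vsp Ψ (k + 1)) := by
    rw [Vsp, Submodule.span_le]
    rintro _ ⟨r, ⟨hr1, hr2⟩, rfl⟩
    simp only [SetLike.mem_coe, Submodule.mem_comap]
    have h1 := D_psi hΨ hα r hr1
    have h2 : Dq K 1 (Ψ r)
        = (Dq K 1 (Ψ r) + (r : K) • Ψ (r + 1)) - (r : K) • Ψ (r + 1) := by abel
    rw [h2]
    exact sub_mem (Vsp_mono (by omega) h1)
      (Submodule.smul_mem _ _ (mem_Vsp (by omega) (by omega)))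
  exact h hx

lemma aeval_map (hΨ : IsJordanChain K α Ψ) (hα : α ≠ 0) {k : ℕ} (g : K[X]) :
    ∀ x ∈ Vsp Ψ k, aeval (Mop K) g x ∈ Vsp Ψ k := by
  induction g using Polynomial.induction_on with
  | C a =>
    intro x hx
    simpa [Algebra.algebraMap_eq_smul_one] using Submodule.smul_mem _ a hx
  | add p q hp hq =>
    intro x hx
    rw [map_add, LinearMap.add_apply]
    exact add_mem (hp x hx) (hq x hx)
  | monomial n a ih =>
    intro x hx
    have heq : aeval (Mop K) (C a * X ^ (n + 1)) x
        = aeval (Mop K) (C a * X ^ n) (Mop K x) := by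
      rw [pow_succ, ← mul_assoc, map_mul, aeval_X, Module.End.mul_apply]
    rw [heq]
    exact ih _ (M_map hΨ hα hx)

lemma aevalM_psi (hΨ : IsJordanChain K α Ψ) (hα : α ≠ 0) {s : ℕ} (hs : 1 ≤ s) (g : K[X]) :
    aeval (Mop K) g (Ψ s) - g.eval α • Ψ s ∈ Vsp Ψ s := by
  obtain ⟨q, hq⟩ := Polynomial.X_sub_C_dvd_sub_C_eval (a := α) (p := g)
  have hop : aeval (Mop K) g (Ψ s) - g.eval α • Ψ s
      = Nop K α (aeval (Mop K) q (Ψ s)) := by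
    have h1 := congrArg (fun pp => aeval (Mop K) pp (Ψ s)) hq
    simp only [map_sub, map_mul, aeval_X, aeval_C, Algebra.algebraMap_eq_smul_one,
      LinearMap.sub_apply, Module.End.mul_apply, LinearMap.smul_apply,
      Module.End.one_apply] at h1
    rw [Nop_def]
    exact h1
  rw [hop]
  exact N_map hΨ hα (aeval_map hΨ hα q _ (mem_Vsp hs (lt_add_one s)))

lemma Dpow_psi (hΨ : IsJordanChain K α Ψ) (hα : α ≠ 0) {s : ℕ} (hs : 1 ≤ s) (j : ℕ) :
    (Dq K 1 ^ j) (Ψ s)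
        - ((-1 : K) ^ j * ∏ i ∈ Finset.range j, ((s : K) + (i : K))) • Ψ (s + j)
      ∈ Vsp Ψ (s + j) := by
  induction j with
  | zero => simp
  | succ j ih =>
    have hD := D_psi hΨ hα (s + j) (by omega)
    have key : (Dq K 1 ^ (j + 1)) (Ψ s)
          - ((-1 : K) ^ (j + 1) * ∏ i ∈ Finset.range (j + 1), ((s : K) + (i : K)))
            • Ψ (s + j + 1)
        = Dq K 1 ((Dq K 1 ^ j) (Ψ s)
            - ((-1 : K) ^ j * ∏ i ∈ Finset.range j, ((s : K) + (i : K))) • Ψ (s + j))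
          + ((-1 : K) ^ j * ∏ i ∈ Finset.range j, ((s : K) + (i : K)))
            • (Dq K 1 (Ψ (s + j)) + ((s + j : ℕ) : K) • Ψ (s + j + 1)) := by
      rw [pow_succ', Module.End.mul_apply, map_sub, map_smul,
        Finset.prod_range_succ (f := fun i => ((s : K) + (i : K)))]
      push_cast
      module
    rw [show s + (j + 1) = s + j + 1 from rfl, key]
    exact add_mem (D_map hΨ hα ih) (Submodule.smul_mem _ _ hD)

end Aux

/-- for `q = 1` and `P = Σ_{j=0}^m p_j(M) D_1^j` with `p_m ≠ 0`,
`P Ψ_{α,s} − (−1)^m s(s+1)⋯(s+m−1) p_m(α) Ψ_{α,s+m}` lies in the span of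
`{Ψ_{α,r} : 1 ≤ r < s+m}`. -/
theorem P_Psi_s_q_eq_one (K : Type*) [Field K]
    (hqi : ∀ n : ℤ, n ≠ 0 → qInt K (1 : K) n ≠ 0)
    (m : ℕ) (p : ℕ → K[X]) (hpm : p m ≠ 0)
    (α : K) (hα : α ≠ 0) (s : ℕ) (hs : 1 ≤ s)
    (Ψ : ℕ → ℤ → K) (hΨ : IsJordanChain K α Ψ) :
    (∑ j ∈ Finset.range (m + 1), aeval (Mop K) (p j) * Dq K 1 ^ j) (Ψ s) -
        ((-1) ^ m * (∏ i ∈ Finset.range m, ((s : K) + (i : K))) * (p m).eval α) • Ψ (s + m) ∈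
      Submodule.span K (Ψ '' {r : ℕ | 1 ≤ r ∧ r < s + m}) := by
  show _ ∈ Vsp Ψ (s + m)
  have hterm : ∀ j ∈ Finset.range (m + 1),
      (aeval (Mop K) (p j) * Dq K 1 ^ j) (Ψ s)
        - ((-1 : K) ^ j * (∏ i ∈ Finset.range j, ((s : K) + (i : K))) * (p j).eval α)
          • Ψ (s + j) ∈ Vsp Ψ (s + m) := by
    intro j hj
    simp only [Finset.mem_range] at hj
    have h1 := Dpow_psi hΨ hα hs j
    have h2 := aevalM_psi hΨ hα (show 1 ≤ s + j by omega) (p j)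
    have key : (aeval (Mop K) (p j) * Dq K 1 ^ j) (Ψ s)
          - ((-1 : K) ^ j * (∏ i ∈ Finset.range j, ((s : K) + (i : K))) * (p j).eval α)
            • Ψ (s + j)
        = aeval (Mop K) (p j) ((Dq K 1 ^ j) (Ψ s)
            - ((-1 : K) ^ j * ∏ i ∈ Finset.range j, ((s : K) + (i : K))) • Ψ (s + j))
          + ((-1 : K) ^ j * ∏ i ∈ Finset.range j, ((s : K) + (i : K)))
            • (aeval (Mop K) (p j) (Ψ (s + j)) - (p j).eval α • Ψ (s + j)) := by
      rw [Module.End.mul_apply, map_sub, map_smul]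
      module
    rw [key]
    exact add_mem (Vsp_mono (by omega) (aeval_map hΨ hα (p j) _ h1))
      (Submodule.smul_mem _ _ (Vsp_mono (by omega) h2))
  have hsum : (∑ j ∈ Finset.range (m + 1), aeval (Mop K) (p j) * Dq K 1 ^ j) (Ψ s) -
        ((-1) ^ m * (∏ i ∈ Finset.range m, ((s : K) + (i : K))) * (p m).eval α) • Ψ (s + m)
      = (∑ j ∈ Finset.range (m + 1),
          ((aeval (Mop K) (p j) * Dq K 1 ^ j) (Ψ s)
            - ((-1 : K) ^ j * (∏ i ∈ Finset.range j, ((s : K) + (i : K))) * (p j).eval α)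
              • Ψ (s + j)))
        + ∑ j ∈ Finset.range m,
            ((-1 : K) ^ j * (∏ i ∈ Finset.range j, ((s : K) + (i : K))) * (p j).eval α)
              • Ψ (s + j) := by
    rw [LinearMap.sum_apply, Finset.sum_sub_distrib,
      Finset.sum_range_succ
        (f := fun j => ((-1 : K) ^ j * (∏ i ∈ Finset.range j, ((s : K) + (i : K)))
          * (p j).eval α) • Ψ (s + j))]
    abel
  rw [hsum]
  refine add_mem (Submodule.sum_mem _ hterm) (Submodule.sum_mem _ fun j hj => ?_)
  simp only [Finset.mem_range] at hj
  exact Submodule.smul_mem _ _ (mem_Vsp (by omega) (by omega))
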